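/- For every ellipse E ⊆ ℝ² centered at the origin defined by a positive definite symmetric 2×2 matrix of determinant 1, there exists an integer matrix G of determinant ±1 such that the image G(E) is (1/2)-upright, i.e., area(G(E))/area(BBox(G(E))) ≥ 1/2. -/

import Mathlib

/-- Gauss reduction of a binary quadratic form of determinant 1. -/
lemma reduce_form (d00 d01 d11 : ℝ) (h0 : 0 < d00) (hdet : d00 * d11 - d01 ^ 2 = 1) :
    ∃ p q r s : ℤ, p * s - q * r = 1 ∧
      0 < d11 * (p:ℝ)^2 - 2*d01*p*q + d00*q^2 ∧
      0 < d11 * (r:ℝ)^2 - 2*d01*r*s + d00*s^2 ∧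
      (d11 * (p:ℝ)^2 - 2*d01*p*q + d00*q^2) *
        (d11 * (r:ℝ)^2 - 2*d01*r*s + d00*s^2) ≤ 4/3 := by
  set F : ℤ → ℤ → ℝ := fun p q => d11 * (p:ℝ)^2 - 2*d01*p*q + d00*q^2 with hF
  have h11 : 0 < d11 := by nlinarith [sq_nonneg d01]
  have hFpos : ∀ p q : ℤ, ¬(p = 0 ∧ q = 0) → 0 < F p q := by
    intro p q h
    have key : d00 * F p q = (p:ℝ)^2 + (d01 * p - d00 * q)^2 := by
      simp only [hF]; linear_combination (p:ℝ)^2 * hdet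
    by_cases hp : p = 0
    · have hq : q ≠ 0 := fun hq => h ⟨hp, hq⟩
      have : ((q:ℝ)) ≠ 0 := Int.cast_ne_zero.mpr hq
      have h1 : 0 < d00 * F p q := by
        have hq2 : 0 < (d00 * (q:ℝ))^2 := by positivity
        rw [key]; subst hp; push_cast; nlinarith
      nlinarith
    · have : ((p:ℝ)) ≠ 0 := Int.cast_ne_zero.mpr hp
      have h1 : 0 < d00 * F p q := by
        have hp2 : 0 < ((p:ℝ))^2 := by positivity
        rw [key]; nlinarith [sq_nonneg (d01 * (p:ℝ) - d00 * q)]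
      nlinarith
  -- finiteness of sublevel set
  set S : Set (ℤ × ℤ) := {x | x ≠ 0 ∧ F x.1 x.2 ≤ F 1 0} with hS
  have hSne : S.Nonempty := ⟨(1, 0), by simp [hS], le_rfl⟩
  have hbound : ∀ x ∈ S, (x.1 : ℝ)^2 ≤ d00 * F 1 0 ∧ (x.2 : ℝ)^2 ≤ d11 * F 1 0 := by
    rintro ⟨p, q⟩ ⟨-, hle⟩
    have k1 : d00 * F p q = (p:ℝ)^2 + (d01 * p - d00 * q)^2 := by
      simp only [hF]; linear_combination (p:ℝ)^2 * hdet
    have k2 : d11 * F p q = (q:ℝ)^2 + (d11 * p - d01 * q)^2 := by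
      simp only [hF]; linear_combination (q:ℝ)^2 * hdet
    constructor
    · nlinarith [sq_nonneg (d01 * (p:ℝ) - d00 * q)]
    · nlinarith [sq_nonneg (d11 * (p:ℝ) - d01 * q)]
  have hSfin : S.Finite := by
    set N : ℤ := ⌈d00 * F 1 0⌉ + ⌈d11 * F 1 0⌉ + 1 with hN
    have hceil1 : (0:ℝ) ≤ d00 * F 1 0 := by
      have := hFpos 1 0 (by simp); positivity
    have hceil2 : (0:ℝ) ≤ d11 * F 1 0 := by
      have := hFpos 1 0 (by simp); positivity
    apply Set.Finite.subset (Set.finite_Icc ((-N, -N) : ℤ × ℤ) (N, N))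
    rintro ⟨p, q⟩ hx
    obtain ⟨h1, h2⟩ := hbound _ hx
    have hp2 : p^2 ≤ ⌈d00 * F 1 0⌉ := by
      have : ((p^2 : ℤ) : ℝ) ≤ ⌈d00 * F 1 0⌉ := by
        push_cast; exact h1.trans (Int.le_ceil _)
      exact_mod_cast this
    have hq2 : q^2 ≤ ⌈d11 * F 1 0⌉ := by
      have : ((q^2 : ℤ) : ℝ) ≤ ⌈d11 * F 1 0⌉ := by
        push_cast; exact h2.trans (Int.le_ceil _)
      exact_mod_cast this
    have habs : ∀ n : ℤ, |n| ≤ n^2 + 1 := fun n => by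
      nlinarith [sq_abs n, abs_nonneg n, sq_nonneg (|n| - 1)]
    have c1 : (0:ℤ) ≤ ⌈d00 * F 1 0⌉ := Int.ceil_nonneg hceil1
    have c2 : (0:ℤ) ≤ ⌈d11 * F 1 0⌉ := Int.ceil_nonneg hceil2
    have hp : |p| ≤ N := by
      have := habs p; omega
    have hq : |q| ≤ N := by
      have := habs q; omega
    rw [Set.mem_Icc]
    rw [abs_le] at hp hq
    exact ⟨⟨hp.1, hq.1⟩, hp.2, hq.2⟩
  obtain ⟨⟨p, q⟩, hmem, hmin⟩ := Set.exists_min_image S (fun x => F x.1 x.2) hSfin hSne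
  have hglobal : ∀ x : ℤ × ℤ, x ≠ 0 → F p q ≤ F x.1 x.2 := by
    intro x hx
    by_cases hxS : x ∈ S
    · exact hmin x hxS
    · have h1 : F 1 0 < F x.1 x.2 := by
        by_contra h
        exact hxS ⟨hx, le_of_not_gt h⟩
      exact le_of_lt (lt_of_le_of_lt (hmin (1,0) ⟨by simp, le_rfl⟩) h1)
  have hpq0 : ¬(p = 0 ∧ q = 0) := by
    rintro ⟨rfl, rfl⟩; exact hmem.1 rfl
  have ha : 0 < F p q := hFpos p q hpq0
  -- gcd p q = 1
  have hgcd : Int.gcd p q = 1 := by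
    by_contra hg
    have hgne : Int.gcd p q ≠ 0 := fun h => hpq0 (Int.gcd_eq_zero_iff.mp h)
    set g : ℤ := (Int.gcd p q : ℤ) with hgd
    have hg2 : 2 ≤ g := by
      have : 1 ≤ Int.gcd p q := Nat.one_le_iff_ne_zero.mpr hgne
      have : Int.gcd p q ≠ 1 := hg
      omega
    obtain ⟨p', hp'⟩ : g ∣ p := Int.gcd_dvd_left p q
    obtain ⟨q', hq'⟩ : g ∣ q := Int.gcd_dvd_right p q
    have hpq'0 : ¬(p' = 0 ∧ q' = 0) := by
      rintro ⟨rfl, rfl⟩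
      simp at hp' hq'
      exact hpq0 ⟨hp', hq'⟩
    have hscale : F p q = (g:ℝ)^2 * F p' q' := by
      simp only [hF, hp', hq']; push_cast; ring
    have h1 : F p q ≤ F p' q' := hglobal (p', q') (by
      simp only [Ne, Prod.mk_eq_zero, not_and_or]
      rcases not_and_or.mp hpq'0 with h | h
      · exact Or.inl h
      · exact Or.inr h)
    have h3 : 0 < F p' q' := hFpos _ _ hpq'0
    have hg2r : (2:ℝ) ≤ (g:ℝ) := by exact_mod_cast hg2
    have h4 : (0:ℝ) < (g:ℝ)^2 - 1 := by nlinarith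
    have h5 := mul_pos h4 h3
    nlinarith
  -- Bezout
  have hbez := Int.gcd_eq_gcd_ab p q
  rw [hgcd] at hbez
  set u : ℤ := Int.gcdA p q
  set v : ℤ := Int.gcdB p q
  have hdet0 : p * u + q * v = 1 := by exact_mod_cast hbez.symm
  set r0 : ℤ := -v
  set s0 : ℤ := u
  set b0 : ℝ := d11*(p:ℝ)*r0 - d01*((p:ℝ)*s0 + (q:ℝ)*r0) + d00*(q:ℝ)*s0 with hb0
  set k : ℤ := round (-b0 / F p q) with hk
  have hdet1 : p * (s0 + k*q) - q * (r0 + k*p) = 1 := by linear_combination hdet0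
  have hrs0 : ¬(r0 + k*p = 0 ∧ s0 + k*q = 0) := by
    rintro ⟨h1, h2⟩; rw [h1, h2] at hdet1; simp at hdet1
  have hc : 0 < F (r0+k*p) (s0+k*q) := hFpos _ _ hrs0
  have hca : F p q ≤ F (r0+k*p) (s0+k*q) := by
    refine hglobal (r0+k*p, s0+k*q) ?_
    simp only [Ne, Prod.mk_eq_zero, not_and_or]
    exact not_and_or.mp hrs0
  set b : ℝ := d11*(p:ℝ)*((r0+k*p : ℤ):ℝ) - d01*((p:ℝ)*((s0+k*q : ℤ):ℝ) + (q:ℝ)*((r0+k*p : ℤ):ℝ)) + d00*(q:ℝ)*((s0+k*q : ℤ):ℝ) with hb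
  have hbe : b = b0 + (k:ℝ) * F p q := by
    simp only [hb, hb0, hF]; push_cast; ring
  have hkb : |b| ≤ F p q / 2 := by
    have h1 : |(-b0 / F p q) - ((round (-b0 / F p q) : ℤ):ℝ)| ≤ 1/2 := abs_sub_round _
    rw [← hk] at h1
    have h2 : -b0 / F p q - (k:ℝ) = -b / F p q := by
      rw [hbe]; field_simp; ring
    rw [h2, abs_div, abs_neg, abs_of_pos ha] at h1
    have := (div_le_iff₀ ha).mp h1
    linarith
  have hd1r : ((p*(s0+k*q) - q*(r0+k*p) : ℤ):ℝ) = 1 := by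
    rw [hdet1]; norm_num
  have hidentity : F p q * F (r0+k*p) (s0+k*q) - b^2
      = ((p*(s0+k*q) - q*(r0+k*p) : ℤ):ℝ)^2 * (d00*d11 - d01^2) := by
    simp only [hF, hb]; push_cast; ring
  rw [hd1r, hdet, one_pow, one_mul] at hidentity
  have hb2 : b^2 ≤ (F p q)^2/4 := by
    have h3 := mul_self_le_mul_self (abs_nonneg b) hkb
    rw [abs_mul_abs_self] at h3
    nlinarith
  have ha2 : (F p q)^2 ≤ F p q * F (r0+k*p) (s0+k*q) := by
    rw [sq]; exact mul_le_mul_of_nonneg_left hca ha.le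
  have hfin : F p q * F (r0+k*p) (s0+k*q) ≤ 4/3 := by
    obtain ⟨a, hA⟩ : ∃ x, F p q = x := ⟨_, rfl⟩
    obtain ⟨c, hC⟩ : ∃ x, F (r0+k*p) (s0+k*q) = x := ⟨_, rfl⟩
    obtain ⟨bb, hBB⟩ : ∃ x, b = x := ⟨_, rfl⟩
    rw [hBB] at hidentity hb2
    rw [hA] at hidentity hb2 ha2 ⊢
    rw [hC] at hidentity ha2 ⊢
    linarith
  exact ⟨p, q, r0 + k*p, s0 + k*q, by linear_combination hdet0, ha, hc, hfin⟩
/-- Projection of an ellipse onto a linear functional. -/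
lemma proj_ellipse (d00 d01 d11 w0 w1 : ℝ) (h0 : 0 < d00) (hdet : d00*d11 - d01^2 = 1)
    (hw : ¬(w0 = 0 ∧ w1 = 0)) :
    (fun u : Fin 2 → ℝ => w0 * u 0 + w1 * u 1) ''
      {u : Fin 2 → ℝ | d00 * u 0 ^ 2 + 2*d01 * u 0 * u 1 + d11 * u 1 ^ 2 ≤ 1}
    = Set.Icc (-Real.sqrt (d11*w0^2 - 2*d01*w0*w1 + d00*w1^2))
        (Real.sqrt (d11*w0^2 - 2*d01*w0*w1 + d00*w1^2)) := by
  set m : ℝ := d11*w0^2 - 2*d01*w0*w1 + d00*w1^2 with hmdef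
  have hm : 0 < m := by
    have key : d00 * m = w0^2 + (d01 * w0 - d00 * w1)^2 := by
      simp only [hmdef]; linear_combination w0^2 * hdet
    by_cases hw0 : w0 = 0
    · have hw1 : w1 ≠ 0 := fun h => hw ⟨hw0, h⟩
      subst hw0
      have h1 : 0 < (d01 * 0 - d00 * w1)^2 := by
        have : d01 * 0 - d00 * w1 ≠ 0 := by
          simp only [mul_zero, zero_sub, neg_ne_zero]
          exact mul_ne_zero h0.ne' hw1
        positivity
      nlinarith [sq_nonneg (0:ℝ)]
    · have h1 : 0 < w0^2 := by positivity
      nlinarith [sq_nonneg (d01 * w0 - d00 * w1)]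
  ext t
  simp only [Set.mem_image, Set.mem_setOf_eq, Set.mem_Icc]
  constructor
  · rintro ⟨u, hu, rfl⟩
    have iden : m * (d00 * u 0 ^ 2 + 2*d01 * u 0 * u 1 + d11 * u 1 ^ 2)
        - (w0 * u 0 + w1 * u 1)^2 * (d00*d11 - d01^2)
        = (-w1*(d00*(u 0)+d01*(u 1)) + w0*(d01*(u 0)+d11*(u 1)))^2 := by
      simp only [hmdef]; ring
    have key : (w0 * u 0 + w1 * u 1)^2 ≤ m := by
      rw [hdet] at iden
      nlinarith [sq_nonneg (-w1*(d00*(u 0)+d01*(u 1)) + w0*(d01*(u 0)+d11*(u 1)))]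
    have habs : |w0 * u 0 + w1 * u 1| ≤ Real.sqrt m := by
      rw [← Real.sqrt_sq_eq_abs]
      exact Real.sqrt_le_sqrt key
    exact abs_le.mp habs
  · rintro ⟨h1, h2⟩
    have ht2 : t^2 ≤ m := by
      have habs : |t| ≤ Real.sqrt m := abs_le.mpr ⟨h1, h2⟩
      have := Real.sq_sqrt hm.le
      nlinarith [sq_abs t, abs_nonneg t, Real.sqrt_nonneg m]
    refine ⟨![t*(d11*w0 - d01*w1)/m, t*(d00*w1 - d01*w0)/m], ?_, ?_⟩
    · show d00 * _ ^ 2 + 2*d01 * _ * _ + d11 * _ ^ 2 ≤ 1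
      simp only [Matrix.cons_val_zero, Matrix.cons_val_one, Matrix.head_cons]
      have hQ : d00 * (t*(d11*w0 - d01*w1)/m) ^ 2
          + 2*d01 * (t*(d11*w0 - d01*w1)/m) * (t*(d00*w1 - d01*w0)/m)
          + d11 * (t*(d00*w1 - d01*w0)/m) ^ 2 = t^2 / m := by
        have hQBw : d00*(d11*w0 - d01*w1)^2 + 2*d01*(d11*w0 - d01*w1)*(d00*w1 - d01*w0)
            + d11*(d00*w1 - d01*w0)^2 = m := by
          simp only [hmdef]
          linear_combination (d11*w0^2 - 2*d01*w0*w1 + d00*w1^2) * hdet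
        have hre : d00 * (t*(d11*w0 - d01*w1)/m) ^ 2
            + 2*d01 * (t*(d11*w0 - d01*w1)/m) * (t*(d00*w1 - d01*w0)/m)
            + d11 * (t*(d00*w1 - d01*w0)/m) ^ 2
            = (t/m)^2 * (d00*(d11*w0 - d01*w1)^2
              + 2*d01*(d11*w0 - d01*w1)*(d00*w1 - d01*w0) + d11*(d00*w1 - d01*w0)^2) := by
          ring
        rw [hre, hQBw]
        field_simp
      rw [hQ]
      rw [div_le_one hm]
      exact ht2
    · simp only [Matrix.cons_val_zero, Matrix.cons_val_one, Matrix.head_cons]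
      field_simp
      simp only [hmdef]
      ring

open MeasureTheory Real

lemma volume_unit_disk :
    volume {u : Fin 2 → ℝ | u 0 ^ 2 + u 1 ^ 2 ≤ 1} = ENNReal.ofReal π := by
  have h := MeasureTheory.volume_sum_rpow_le (ι := Fin 2) (p := 2) (by norm_num) 1
  have hset : {x : Fin 2 → ℝ | (∑ i, |x i| ^ (2:ℝ)) ^ (1/(2:ℝ)) ≤ 1}
      = {u : Fin 2 → ℝ | u 0 ^ 2 + u 1 ^ 2 ≤ 1} := by
    ext x
    have hsum : ∑ i, |x i| ^ (2:ℝ) = x 0 ^ 2 + x 1 ^ 2 := by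
      rw [Fin.sum_univ_two]
      rw [show ((2:ℝ) = ((2:ℕ):ℝ)) by norm_num, rpow_natCast, rpow_natCast]
      rw [sq_abs, sq_abs]
    simp only [Set.mem_setOf_eq, hsum]
    have hnn : (0:ℝ) ≤ x 0 ^ 2 + x 1 ^ 2 := by positivity
    constructor
    · intro hle
      by_contra hgt
      push_neg at hgt
      have h1 : (1:ℝ) < (x 0 ^ 2 + x 1 ^ 2) ^ (1/(2:ℝ)) :=
        (Real.one_lt_rpow_iff_of_pos (by linarith)).mpr (Or.inl ⟨hgt, by norm_num⟩)
      linarith [h1.trans_le hle]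
    · intro hle
      exact Real.rpow_le_one hnn hle (by norm_num)
  rw [hset] at h
  rw [h]
  have hcard : Fintype.card (Fin 2) = 2 := by simp
  rw [hcard]
  have hg1 : Real.Gamma (1/2 + 1) = Real.sqrt π / 2 := by
    rw [Real.Gamma_add_one (by norm_num), Real.Gamma_one_half_eq]; ring
  have hg2 : Real.Gamma (((2:ℕ):ℝ)/2 + 1) = 1 := by
    norm_num [Real.Gamma_two]
  rw [hg1, hg2]
  have : (2 * (Real.sqrt π / 2)) ^ 2 / 1 = π := by
    rw [div_one]
    have : 2 * (Real.sqrt π / 2) = Real.sqrt π := by ring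
    rw [this, Real.sq_sqrt Real.pi_pos.le]
  rw [this]
  simp
open Matrix MeasureTheory

/-- Every ellipse centered at the origin defined by a symmetric positive
    definite matrix of determinant 1 can be mapped by an integer matrix of
    determinant ±1 to a (1/2)-upright ellipse. -/
theorem stmt8 (D : Matrix (Fin 2) (Fin 2) ℝ) (hsymm : D.IsSymm) (hpd : D.PosDef)
    (hdet : D.det = 1) :
    ∃ G : Matrix (Fin 2) (Fin 2) ℤ, (G.det = 1 ∨ G.det = -1) ∧
      (volume ((fun u : Fin 2 → ℝ => (G.map (Int.cast : ℤ → ℝ)) *ᵥ u) ''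
          {u : Fin 2 → ℝ | u ⬝ᵥ (D *ᵥ u) ≤ 1})).toReal /
      (volume {v : Fin 2 → ℝ | ∀ i : Fin 2, v i ∈ (fun u : Fin 2 → ℝ => u i) ''
          ((fun u : Fin 2 → ℝ => (G.map (Int.cast : ℤ → ℝ)) *ᵥ u) ''
            {u : Fin 2 → ℝ | u ⬝ᵥ (D *ᵥ u) ≤ 1})}).toReal
        ≥ 1 / 2 := by
  have hsym : D 1 0 = D 0 1 := hsymm.apply 0 1
  set d00 : ℝ := D 0 0 with hd00
  set d01 : ℝ := D 0 1 with hd01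
  set d11 : ℝ := D 1 1 with hd11
  have hdet2 : d00 * d11 - d01 ^ 2 = 1 := by
    have h := hdet
    rw [Matrix.det_fin_two, hsym] at h
    linear_combination h
  have h00 : 0 < d00 := by
    have h := hpd.dotProduct_mulVec_pos (x := ![1, 0]) (by
      intro hc
      have := congrFun hc 0
      simp at this)
    simpa [dotProduct, Matrix.mulVec, Fin.sum_univ_two] using h
  -- quadratic form rewrite
  have hQ : ∀ u : Fin 2 → ℝ, u ⬝ᵥ (D *ᵥ u)
      = d00 * u 0 ^ 2 + 2*d01 * u 0 * u 1 + d11 * u 1 ^ 2 := by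
    intro u
    simp only [dotProduct, Matrix.mulVec, Fin.sum_univ_two, hsym, ← hd00, ← hd01, ← hd11]
    ring
  have hE : {u : Fin 2 → ℝ | u ⬝ᵥ (D *ᵥ u) ≤ 1}
      = {u : Fin 2 → ℝ | d00 * u 0 ^ 2 + 2*d01 * u 0 * u 1 + d11 * u 1 ^ 2 ≤ 1} := by
    ext u; simp only [Set.mem_setOf_eq, hQ]
  obtain ⟨p, q, r, s, hdet1, ha, hc, hac⟩ := reduce_form d00 d01 d11 h00 hdet2
  set a : ℝ := d11 * (p:ℝ)^2 - 2*d01*p*q + d00*q^2 with hadef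
  set c : ℝ := d11 * (r:ℝ)^2 - 2*d01*r*s + d00*s^2 with hcdef
  refine ⟨!![p, q; r, s], Or.inl (by rw [Matrix.det_fin_two_of]; exact hdet1), ?_⟩
  set L : Matrix (Fin 2) (Fin 2) ℝ := (!![p, q; r, s] : Matrix (Fin 2) (Fin 2) ℤ).map
    (Int.cast : ℤ → ℝ) with hLdef
  have hLe : L = !![(p:ℝ), (q:ℝ); (r:ℝ), (s:ℝ)] := by
    rw [hLdef]
    ext i j
    fin_cases i <;> fin_cases j <;> simp [Matrix.map_apply]
  -- numerator
  have h11 : 0 < d11 := by nlinarith [sq_nonneg d01]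
  set s2 : ℝ := Real.sqrt d00 with hs2
  have hs2pos : 0 < s2 := Real.sqrt_pos.mpr h00
  have hs2sq : s2 ^ 2 = d00 := Real.sq_sqrt h00.le
  set C : Matrix (Fin 2) (Fin 2) ℝ := !![1/s2, -d01/s2; 0, s2] with hCdef
  have hCV : ∀ x : Fin 2 → ℝ, C *ᵥ x = ![(1/s2) * x 0 + (-d01/s2) * x 1, s2 * x 1] := by
    intro x
    funext i
    fin_cases i <;>
      simp [hCdef, Matrix.mulVec, dotProduct, Fin.sum_univ_two]
  have hEC : {u : Fin 2 → ℝ | d00 * u 0 ^ 2 + 2*d01 * u 0 * u 1 + d11 * u 1 ^ 2 ≤ 1}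
      = (fun x => C *ᵥ x) '' {x : Fin 2 → ℝ | x 0 ^ 2 + x 1 ^ 2 ≤ 1} := by
    ext u
    simp only [Set.mem_image, Set.mem_setOf_eq]
    constructor
    · intro hu
      refine ⟨![s2 * u 0 + d01 * u 1 / s2, u 1 / s2], ?_, ?_⟩
      · show (![s2 * u 0 + d01 * u 1 / s2, u 1 / s2] : Fin 2 → ℝ) 0 ^ 2 + _ ^ 2 ≤ 1
        simp only [Matrix.cons_val_zero, Matrix.cons_val_one, Matrix.head_cons]
        have he : (s2 * u 0 + d01 * u 1 / s2) ^ 2 + (u 1 / s2) ^ 2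
            = d00 * u 0 ^ 2 + 2*d01 * u 0 * u 1 + d11 * u 1 ^ 2 := by
          field_simp
          linear_combination (u 0^2*s2^2 - u 1^2*d11) * hs2sq - u 1^2 * hdet2
        rw [he]; exact hu
      · rw [hCV]
        funext i
        fin_cases i <;>
          simp only [Fin.zero_eta, Fin.mk_one, Matrix.cons_val_zero, Matrix.cons_val_one, Matrix.head_cons] <;>
          field_simp <;> ring
    · rintro ⟨x, hx, rfl⟩
      rw [hCV]
      simp only [Matrix.cons_val_zero, Matrix.cons_val_one, Matrix.head_cons]
      have he : d00 * ((1/s2) * x 0 + (-d01/s2) * x 1) ^ 2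
          + 2*d01 * ((1/s2) * x 0 + (-d01/s2) * x 1) * (s2 * x 1)
          + d11 * (s2 * x 1) ^ 2 = x 0 ^ 2 + x 1 ^ 2 := by
        field_simp
        linear_combination (s2^2*d11*x 1^2 - (x 0 - d01*x 1)^2) * hs2sq
          + s2^2*x 1^2 * hdet2
      rw [he]; exact hx
  have hdetL : L.det = 1 := by
    rw [hLe, Matrix.det_fin_two_of]
    have : ((p*s - q*r : ℤ) : ℝ) = 1 := by exact_mod_cast congrArg (Int.cast : ℤ → ℝ) hdet1
    push_cast at this
    linarith
  have hdetC : C.det = 1 := by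
    rw [hCdef, Matrix.det_fin_two_of]
    field_simp
    ring
  have hnum : volume ((fun u : Fin 2 → ℝ => L *ᵥ u) '' {u : Fin 2 → ℝ | u ⬝ᵥ (D *ᵥ u) ≤ 1})
      = ENNReal.ofReal Real.pi := by
    rw [hE, hEC, ← Set.image_comp]
    have hcomp : ((fun u : Fin 2 → ℝ => L *ᵥ u) ∘ fun x : Fin 2 → ℝ => C *ᵥ x)
        = ⇑(Matrix.toLin' (L * C)) := by
      funext x
      simp [Function.comp, Matrix.mulVec_mulVec, Matrix.toLin'_apply]
    rw [hcomp, MeasureTheory.Measure.addHaar_image_linearMap, LinearMap.det_toLin',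
      Matrix.det_mul, hdetL, hdetC, volume_unit_disk]
    norm_num
  -- denominator
  set rad : Fin 2 → ℝ := ![Real.sqrt a, Real.sqrt c] with hrad
  have hproj : ∀ i : Fin 2, (fun u : Fin 2 → ℝ => u i) ''
      ((fun u : Fin 2 → ℝ => L *ᵥ u) '' {u : Fin 2 → ℝ | u ⬝ᵥ (D *ᵥ u) ≤ 1})
      = Set.Icc (-(rad i)) (rad i) := by
    intro i
    rw [← Set.image_comp, hE]
    have hcomp : ((fun u : Fin 2 → ℝ => u i) ∘ fun u : Fin 2 → ℝ => L *ᵥ u)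
        = fun u : Fin 2 → ℝ => L i 0 * u 0 + L i 1 * u 1 := by
      funext u
      simp [Function.comp, Matrix.mulVec, dotProduct, Fin.sum_univ_two]
    rw [hcomp]
    have hw : ¬((L i 0 : ℝ) = 0 ∧ L i 1 = 0) := by
      rintro ⟨h1, h2⟩
      rw [hLe] at h1 h2
      fin_cases i <;> simp at h1 h2 <;> rw [h1, h2] at hdet1 <;> simp at hdet1
    rw [proj_ellipse d00 d01 d11 (L i 0) (L i 1) h00 hdet2 hw]
    have hradi : rad i = Real.sqrt (d11*(L i 0)^2 - 2*d01*(L i 0)*(L i 1) + d00*(L i 1)^2) := by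
      fin_cases i
      · rw [hLe]
        simp only [Matrix.cons_val', Matrix.cons_val_zero, Matrix.empty_val',
          Matrix.cons_val_fin_one, Matrix.cons_val_one, Matrix.head_cons,
          Matrix.head_fin_const, hrad, Fin.isValue]
        exact congrArg Real.sqrt hadef
      · rw [hLe]
        simp only [Matrix.cons_val', Matrix.cons_val_zero, Matrix.empty_val',
          Matrix.cons_val_fin_one, Matrix.cons_val_one, Matrix.head_cons,
          Matrix.head_fin_const, hrad, Fin.isValue]
        exact congrArg Real.sqrt hcdef
    rw [hradi]
  have hsa : 0 < Real.sqrt a := Real.sqrt_pos.mpr ha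
  have hsc : 0 < Real.sqrt c := Real.sqrt_pos.mpr hc
  have hden : volume {v : Fin 2 → ℝ | ∀ i : Fin 2, v i ∈ (fun u : Fin 2 → ℝ => u i) ''
      ((fun u : Fin 2 → ℝ => L *ᵥ u) '' {u : Fin 2 → ℝ | u ⬝ᵥ (D *ᵥ u) ≤ 1})}
      = ENNReal.ofReal (2 * Real.sqrt a) * ENNReal.ofReal (2 * Real.sqrt c) := by
    have hset : {v : Fin 2 → ℝ | ∀ i : Fin 2, v i ∈ (fun u : Fin 2 → ℝ => u i) ''
        ((fun u : Fin 2 → ℝ => L *ᵥ u) '' {u : Fin 2 → ℝ | u ⬝ᵥ (D *ᵥ u) ≤ 1})}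
        = Set.pi Set.univ (fun i => Set.Icc (-(rad i)) (rad i)) := by
      ext v
      simp only [Set.mem_setOf_eq, Set.mem_pi, Set.mem_univ, forall_true_left, hproj]
    rw [hset, volume_pi_pi, Fin.prod_univ_two]
    have h0 : rad 0 = Real.sqrt a := by simp [hrad]
    have h1 : rad 1 = Real.sqrt c := by simp [hrad]
    rw [h0, h1, Real.volume_Icc, Real.volume_Icc]
    rw [show Real.sqrt a - -Real.sqrt a = 2*Real.sqrt a by ring,
      show Real.sqrt c - -Real.sqrt c = 2*Real.sqrt c by ring]
  rw [hnum, hden]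
  rw [ENNReal.toReal_ofReal Real.pi_pos.le, ENNReal.toReal_mul,
    ENNReal.toReal_ofReal (by positivity), ENNReal.toReal_ofReal (by positivity)]
  rw [ge_iff_le, le_div_iff₀ (by positivity)]
  have hmul : Real.sqrt a * Real.sqrt c = Real.sqrt (a * c) := (Real.sqrt_mul ha.le c).symm
  have hsle : Real.sqrt (a * c) ≤ 1.2 := by
    have h1 : Real.sqrt (a*c) ≤ Real.sqrt 1.44 := Real.sqrt_le_sqrt (by linarith)
    have h2 : Real.sqrt 1.44 = 1.2 := by
      rw [show (1.44:ℝ) = 1.2^2 by norm_num, Real.sqrt_sq (by norm_num)]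
    linarith
  nlinarith [Real.pi_gt_three, hsa, hsc, hmul]
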